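/- Let A be positive semidefinite and X, Y nonzero (in A-seminorm) operators admitting A-adjoints. Then dw_A(X ± Y)² ≤ 4[ (‖X‖_A² + ‖Y‖_A²)² + w_𝔸([[0,X],[Y,0]])² ], where 𝔸 = diag(A,A). -/

import Mathlib

noncomputable section

namespace DW

variable {H : Type*} [NormedAddCommGroup H] [InnerProductSpace ℂ H]

/-- The semi-inner product induced by `A`: `⟨x,y⟩_A = ⟨Ax, y⟩`. -/
def innA (A : H →L[ℂ] H) (x y : H) : ℂ := inner ℂ (A x) y

/-- The seminorm induced by `A`. -/
def normA (A : H →L[ℂ] H) (x : H) : ℝ := Real.sqrt (innA A x x).re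

/-- `T` is `A`-bounded. -/
def IsABounded (A T : H →L[ℂ] H) : Prop := ∃ c > 0, ∀ x, normA A (T x) ≤ c * normA A x

/-- `S` is an `A`-adjoint of `T`. -/
def IsAAdjointPair (A T S : H →L[ℂ] H) : Prop := ∀ x y, innA A (T x) y = innA A x (S y)

/-- The `A`-operator seminorm. -/
def opNormA (A T : H →L[ℂ] H) : ℝ := sSup {r | ∃ x, normA A x = 1 ∧ r = normA A (T x)}

/-- The `A`-minimum modulus. -/
def mA (A T : H →L[ℂ] H) : ℝ := sInf {r | ∃ x, normA A x = 1 ∧ r = normA A (T x)}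

/-- The `A`-numerical radius. -/
def wA (A T : H →L[ℂ] H) : ℝ :=
  sSup {r | ∃ x, normA A x = 1 ∧ r = ‖innA A (T x) x‖}

/-- The `A`-Crawford number. -/
def cA (A T : H →L[ℂ] H) : ℝ :=
  sInf {r | ∃ x, normA A x = 1 ∧ r = ‖innA A (T x) x‖}

/-- The `A`-Davis-Wielandt radius. -/
def dwA (A T : H →L[ℂ] H) : ℝ :=
  sSup {r | ∃ x, normA A x = 1 ∧
    r = Real.sqrt (‖innA A (T x) x‖ ^ 2 + normA A (T x) ^ 4)}

/-- The semi-inner product on `H ⊕ H` induced by `𝔸 = diag(A,A)`. -/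
def innA2 (A : H →L[ℂ] H) (z w : H × H) : ℂ := innA A z.1 w.1 + innA A z.2 w.2

/-- The seminorm on `H ⊕ H` induced by `𝔸 = diag(A,A)`. -/
def normA2 (A : H →L[ℂ] H) (z : H × H) : ℝ := Real.sqrt (innA2 A z z).re

/-- The `𝔸`-numerical radius on `H ⊕ H`, `𝔸 = diag(A,A)`. -/
def wA2 (A : H →L[ℂ] H) (T : H × H →L[ℂ] H × H) : ℝ :=
  sSup {r | ∃ z, normA2 A z = 1 ∧ r = ‖innA2 A (T z) z‖}

/-- The `𝔸`-Davis-Wielandt radius on `H ⊕ H`, `𝔸 = diag(A,A)`. -/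
def dwA2 (A : H →L[ℂ] H) (T : H × H →L[ℂ] H × H) : ℝ :=
  sSup {r | ∃ z, normA2 A z = 1 ∧
    r = Real.sqrt (‖innA2 A (T z) z‖ ^ 2 + normA2 A (T z) ^ 4)}

/-- The block operator `[[0, X], [Y, 0]]` on `H ⊕ H`. -/
def offDiag (X Y : H →L[ℂ] H) : H × H →L[ℂ] H × H :=
  (X.comp (ContinuousLinearMap.snd ℂ H H)).prod (Y.comp (ContinuousLinearMap.fst ℂ H H))

end DW

open DW

variable {H : Type*} [NormedAddCommGroup H] [InnerProductSpace ℂ H] [CompleteSpace H]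

namespace DWAux

variable {A X Y : H →L[ℂ] H}
set_option linter.unusedSectionVars false

lemma innA_re_nonneg (hA : A.IsPositive) (x : H) : 0 ≤ (innA A x x).re := by
  have := hA.inner_nonneg_left x
  simpa [innA, RCLike.re_to_complex] using (Complex.le_def.mp this).1

lemma innA_conj (hA : A.IsPositive) (x y : H) :
    (starRingEnd ℂ) (innA A y x) = innA A x y := by
  have hs : ∀ u v : H, (inner ℂ (A u) v : ℂ) = inner ℂ u (A v) :=
    (ContinuousLinearMap.isSelfAdjoint_iff_isSymmetric.mp hA.isSelfAdjoint)
  simp only [innA]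
  rw [inner_conj_symm]; exact (hs x y).symm

def coreA (hA : A.IsPositive) : PreInnerProductSpace.Core ℂ H where
  inner := innA A
  conj_inner_symm := fun x y => innA_conj hA x y
  re_inner_nonneg := fun x => innA_re_nonneg hA x
  add_left := fun x y z => by simp [innA, inner_add_left]
  smul_left := fun x y r => by simp [innA, inner_smul_left, mul_comm]

lemma normA_nonneg (A : H →L[ℂ] H) (x : H) : 0 ≤ normA A x := Real.sqrt_nonneg _

lemma normA_sq (hA : A.IsPositive) (x : H) : normA A x ^ 2 = (innA A x x).re :=
  Real.sq_sqrt (innA_re_nonneg hA x)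

lemma innA_cs (hA : A.IsPositive) (x y : H) :
    ‖innA A x y‖ ≤ normA A x * normA A y := by
  have h := @InnerProductSpace.Core.inner_mul_inner_self_le ℂ H _ _ _ (coreA hA) x y
  have h2 : ‖innA A x y‖ * ‖innA A y x‖ ≤ (innA A x x).re * (innA A y y).re := h
  have habs : ‖innA A y x‖ = ‖innA A x y‖ := by
    rw [← innA_conj hA x y]; simp
  rw [habs] at h2
  have hx := innA_re_nonneg hA x
  have hy := innA_re_nonneg hA y
  have hle : ‖innA A x y‖ ≤ Real.sqrt ((innA A x x).re * (innA A y y).re) := by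
    rw [← Real.sqrt_mul_self (norm_nonneg _)]
    exact Real.sqrt_le_sqrt h2
  calc ‖innA A x y‖ = ‖innA A x y‖ := rfl
    _ ≤ Real.sqrt ((innA A x x).re * (innA A y y).re) := hle
    _ = normA A x * normA A y := Real.sqrt_mul hx _

lemma normA_smul (hA : A.IsPositive) (c : ℂ) (x : H) :
    normA A (c • x) = ‖c‖ * normA A x := by
  have h1 : innA A (c • x) (c • x) = ((‖c‖ ^ 2 : ℝ) : ℂ) * innA A x x := by
    simp only [innA, map_smul, inner_smul_left, inner_smul_right]
    rw [← mul_assoc, Complex.mul_conj, Complex.normSq_eq_norm_sq]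
  have h2 : (innA A (c • x) (c • x)).re = ‖c‖ ^ 2 * (innA A x x).re := by
    rw [h1, Complex.re_ofReal_mul]
  rw [normA, h2, normA, Real.sqrt_mul (sq_nonneg _), Real.sqrt_sq (norm_nonneg c)]

lemma normA_add_le (hA : A.IsPositive) (x y : H) :
    normA A (x + y) ≤ normA A x + normA A y := by
  have hxy : (innA A x y).re ≤ normA A x * normA A y :=
    le_trans (Complex.re_le_norm _) (innA_cs hA x y)
  have hre : (innA A (x + y) (x + y)).re
      = (innA A x x).re + 2 * (innA A x y).re + (innA A y y).re := by
    have hc : (innA A y x).re = (innA A x y).re := by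
      rw [← innA_conj hA x y]; simp
    simp only [innA, map_add, inner_add_left, inner_add_right, Complex.add_re]
    have := hc
    simp only [innA] at this
    linarith
  have hb : (innA A (x + y) (x + y)).re ≤ (normA A x + normA A y) ^ 2 := by
    have h1 := normA_sq hA x
    have h2 := normA_sq hA y
    nlinarith
  have hsum : normA A (x + y) ≤ Real.sqrt ((normA A x + normA A y) ^ 2) :=
    Real.sqrt_le_sqrt hb
  rwa [Real.sqrt_sq (add_nonneg (normA_nonneg A x) (normA_nonneg A y))] at hsum

lemma opNormA_nonneg (A T : H →L[ℂ] H) : 0 ≤ opNormA A T :=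
  Real.sSup_nonneg fun r hr => by obtain ⟨x, -, rfl⟩ := hr; exact normA_nonneg A _

lemma bddAbove_opSet (h : opNormA A X ≠ 0) :
    BddAbove {r | ∃ x, normA A x = 1 ∧ r = normA A (X x)} := by
  by_contra hb
  exact h (Real.sSup_of_not_bddAbove hb)

lemma normA_apply_le (hA : A.IsPositive) (hX : ∃ X', IsAAdjointPair A X X')
    (h0 : opNormA A X ≠ 0) (x : H) :
    normA A (X x) ≤ opNormA A X * normA A x := by
  obtain ⟨X', hX'⟩ := hX
  by_cases hx : normA A x = 0
  · have hx0 : (innA A x x).re = 0 := by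
      have h1 := Real.sqrt_eq_zero'.mp hx
      have h2 := innA_re_nonneg hA x
      linarith
    have habs : ‖innA A (X x) (X x)‖ ≤ 0 := by
      rw [hX' x (X x)]
      calc ‖innA A x (X' (X x))‖ ≤ normA A x * normA A (X' (X x)) :=
            innA_cs hA _ _
        _ = 0 := by rw [hx, zero_mul]
    have h3 : (innA A (X x) (X x)).re ≤ 0 :=
      le_trans (Complex.re_le_norm _) habs
    have h4 := innA_re_nonneg hA (X x)
    have h5 : (innA A (X x) (X x)).re = 0 := le_antisymm h3 h4
    rw [normA, h5, Real.sqrt_zero, hx, mul_zero]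
  · have hxpos : 0 < normA A x := lt_of_le_of_ne (normA_nonneg A x) (Ne.symm hx)
    set t := normA A x with ht
    have hu : normA A (((t⁻¹ : ℝ) : ℂ) • x) = 1 := by
      rw [normA_smul hA]
      rw [Complex.norm_real, Real.norm_eq_abs, abs_of_pos (inv_pos.mpr hxpos)]
      field_simp; exact ht.symm
    have hmem : normA A (X (((t⁻¹ : ℝ) : ℂ) • x))
        ∈ {r | ∃ x, normA A x = 1 ∧ r = normA A (X x)} := ⟨_, hu, rfl⟩
    have hle := le_csSup (bddAbove_opSet h0) hmem
    rw [map_smul, normA_smul hA, Complex.norm_real, Real.norm_eq_abs, abs_of_pos (inv_pos.mpr hxpos)] at hle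
    have : normA A (X x) = t * (t⁻¹ * normA A (X x)) := by field_simp
    rw [this]
    calc t * (t⁻¹ * normA A (X x)) ≤ t * opNormA A X :=
          mul_le_mul_of_nonneg_left hle (le_of_lt hxpos)
      _ = opNormA A X * t := mul_comm _ _

lemma offDiag_apply (X Y : H →L[ℂ] H) (z : H × H) : offDiag X Y z = (X z.2, Y z.1) := rfl

lemma normA2_unit (hA : A.IsPositive) {z : H × H} (hz : normA2 A z = 1) :
    normA A z.1 ^ 2 + normA A z.2 ^ 2 = 1 := by
  have h1 : (innA2 A z z).re = 1 := Real.sqrt_eq_one.mp hz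
  rw [normA_sq hA, normA_sq hA]
  simpa [innA2, Complex.add_re] using h1

lemma wA2_nonneg (A : H →L[ℂ] H) (T : H × H →L[ℂ] H × H) : 0 ≤ wA2 A T :=
  Real.sSup_nonneg fun r hr => by obtain ⟨z, -, rfl⟩ := hr; exact norm_nonneg _

lemma wA2_bdd (hA : A.IsPositive) (hX : ∃ X', IsAAdjointPair A X X')
    (hY : ∃ Y', IsAAdjointPair A Y Y') (hX0 : opNormA A X ≠ 0) (hY0 : opNormA A Y ≠ 0) :
    BddAbove {r | ∃ z, normA2 A z = 1 ∧ r = ‖innA2 A (offDiag X Y z) z‖} := by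
  refine ⟨opNormA A X + opNormA A Y, ?_⟩
  rintro r ⟨z, hz, rfl⟩
  have hsum := normA2_unit hA hz
  have ha := normA_nonneg A z.1
  have hb := normA_nonneg A z.2
  have hM := opNormA_nonneg A X
  have hN := opNormA_nonneg A Y
  have h1 : ‖innA A (X z.2) z.1‖ ≤ normA A (X z.2) * normA A z.1 :=
    innA_cs hA _ _
  have h2 : normA A (X z.2) ≤ opNormA A X * normA A z.2 := normA_apply_le hA hX hX0 _
  have h3 : ‖innA A (Y z.1) z.2‖ ≤ normA A (Y z.1) * normA A z.2 :=
    innA_cs hA _ _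
  have h4 : normA A (Y z.1) ≤ opNormA A Y * normA A z.1 := normA_apply_le hA hY hY0 _
  have h5 : innA2 A (offDiag X Y z) z = innA A (X z.2) z.1 + innA A (Y z.1) z.2 := rfl
  rw [h5]
  calc ‖innA A (X z.2) z.1 + innA A (Y z.1) z.2‖
      ≤ ‖innA A (X z.2) z.1‖ + ‖innA A (Y z.1) z.2‖ :=
        norm_add_le _ _
    _ ≤ opNormA A X + opNormA A Y := by
        have k1 : normA A (X z.2) * normA A z.1 ≤ opNormA A X * normA A z.2 * normA A z.1 :=
          mul_le_mul_of_nonneg_right h2 ha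
        have k2 : normA A (Y z.1) * normA A z.2 ≤ opNormA A Y * normA A z.1 * normA A z.2 :=
          mul_le_mul_of_nonneg_right h4 hb
        nlinarith [sq_nonneg (normA A z.1 - normA A z.2), sq_nonneg (normA A z.1 + normA A z.2)]

lemma abs_key (hA : A.IsPositive) (hX : ∃ X', IsAAdjointPair A X X')
    (hY : ∃ Y', IsAAdjointPair A Y Y') (hX0 : opNormA A X ≠ 0) (hY0 : opNormA A Y ≠ 0)
    (s : ℂ) (hs : ‖s‖ = 1) {x : H} (hx : normA A x = 1) :
    ‖innA A (X x) x + s ^ 2 * innA A (Y x) x‖ ≤ 2 * wA2 A (offDiag X Y) := by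
  have hss : (starRingEnd ℂ) s * s = 1 := by
    rw [mul_comm, Complex.mul_conj, Complex.normSq_eq_norm_sq, hs]
    norm_num
  set c : ℂ := (((Real.sqrt 2)⁻¹ : ℝ) : ℂ) with hc
  have hcc : c * c = (((2:ℝ)⁻¹ : ℝ) : ℂ) := by
    rw [hc]
    norm_cast
    rw [← mul_inv, Real.mul_self_sqrt (by norm_num)]
  have hcconj : (starRingEnd ℂ) c = c := Complex.conj_ofReal _
  set z : H × H := (c • x, (s * c) • x) with hzdef
  have hre1 : (innA A x x).re = 1 := Real.sqrt_eq_one.mp hx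
  have hzz : innA2 A z z = innA A x x := by
    simp only [innA2, hzdef, innA, map_smul, inner_smul_left, inner_smul_right]
    rw [map_mul, hcconj]
    push_cast at hcc ⊢
    linear_combination (c * c * (inner ℂ (A x) x : ℂ)) * hss +
      (2 * (inner ℂ (A x) x : ℂ)) * hcc
  have hz1 : normA2 A z = 1 := by
    rw [normA2, hzz, ← normA, hx]
  have hval : innA2 A (offDiag X Y z) z
      = (starRingEnd ℂ) s * (c * c) * (innA A (X x) x + s ^ 2 * innA A (Y x) x) := by
    simp only [innA2, offDiag_apply, hzdef, innA, map_smul, inner_smul_left, inner_smul_right]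
    rw [map_mul, hcconj]
    linear_combination (-(s * c * c * (inner ℂ (A (Y x)) x : ℂ))) * hss
  have hmem : ‖innA2 A (offDiag X Y z) z‖
      ∈ {r | ∃ z, normA2 A z = 1 ∧ r = ‖innA2 A (offDiag X Y z) z‖} :=
    ⟨z, hz1, rfl⟩
  have hle := le_csSup (wA2_bdd hA hX hY hX0 hY0) hmem
  rw [hval] at hle
  rw [norm_mul, norm_mul, hcc] at hle
  have habs1 : ‖(starRingEnd ℂ) s‖ = 1 := by
    rw [Complex.norm_conj, hs]
  have habs2 : ‖(((2:ℝ)⁻¹ : ℝ) : ℂ)‖ = (2:ℝ)⁻¹ := by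
    rw [Complex.norm_real, Real.norm_eq_abs]
    norm_num
  rw [habs1, habs2, one_mul] at hle
  have hw := wA2_nonneg A (offDiag X Y)
  have hfold : wA2 A (offDiag X Y)
      = sSup {r | ∃ z, normA2 A z = 1 ∧ r = ‖innA2 A (offDiag X Y z) z‖} := rfl
  rw [← hfold] at hle
  linarith

lemma dw_bound (hA : A.IsPositive) (hX : ∃ X', IsAAdjointPair A X X')
    (hY : ∃ Y', IsAAdjointPair A Y Y') (hX0 : opNormA A X ≠ 0) (hY0 : opNormA A Y ≠ 0)
    (ε : ℝ) (hε : ε = 1 ∨ ε = -1) :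
    dwA A (X + ((ε:ℂ)) • Y) ^ 2
      ≤ 4 * ((opNormA A X ^ 2 + opNormA A Y ^ 2) ^ 2 + wA2 A (offDiag X Y) ^ 2) := by
  obtain ⟨s, hs, hs2⟩ : ∃ s : ℂ, ‖s‖ = 1 ∧ s ^ 2 = (ε : ℂ) := by
    rcases hε with rfl | rfl
    · exact ⟨1, by simp, by norm_num⟩
    · refine ⟨Complex.I, by simp, ?_⟩
      rw [Complex.I_sq]
      norm_num
  set M := opNormA A X with hM'
  set N := opNormA A Y with hN'
  set w := wA2 A (offDiag X Y) with hw'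
  have hM := opNormA_nonneg A X
  have hN := opNormA_nonneg A Y
  have hw := wA2_nonneg A (offDiag X Y)
  have hRHS : (0:ℝ) ≤ 4 * ((M ^ 2 + N ^ 2) ^ 2 + w ^ 2) := by positivity
  have hεabs : ‖(ε:ℂ)‖ = 1 := by
    rcases hε with rfl | rfl <;> simp
  have hsqrt : dwA A (X + ((ε:ℂ)) • Y) ≤ Real.sqrt (4 * ((M ^ 2 + N ^ 2) ^ 2 + w ^ 2)) := by
    apply Real.sSup_le _ (Real.sqrt_nonneg _)
    rintro r ⟨x, hx, rfl⟩
    apply Real.sqrt_le_sqrt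
    have hTx : (X + ((ε:ℂ)) • Y) x = X x + ((ε:ℂ)) • (Y x) := by simp
    have ha : ‖innA A ((X + ((ε:ℂ)) • Y) x) x‖ ≤ 2 * w := by
      have heq : innA A ((X + ((ε:ℂ)) • Y) x) x
          = innA A (X x) x + s ^ 2 * innA A (Y x) x := by
        rw [hTx]
        simp only [innA, map_add, map_smul, inner_add_left, inner_smul_left,
          Complex.conj_ofReal, hs2]
      rw [heq]
      exact abs_key hA hX hY hX0 hY0 s hs hx
    have hb : normA A ((X + ((ε:ℂ)) • Y) x) ≤ M + N := by
      rw [hTx]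
      refine le_trans (normA_add_le hA _ _) ?_
      have h1 : normA A (X x) ≤ M := by
        have := normA_apply_le hA hX hX0 x
        rwa [hx, mul_one] at this
      have h2 : normA A (((ε:ℂ)) • Y x) ≤ N := by
        rw [normA_smul hA, hεabs, one_mul]
        have := normA_apply_le hA hY hY0 x
        rwa [hx, mul_one] at this
      linarith
    have ha0 : 0 ≤ ‖innA A ((X + ((ε:ℂ)) • Y) x) x‖ := norm_nonneg _
    have hb0 : 0 ≤ normA A ((X + ((ε:ℂ)) • Y) x) := normA_nonneg A _
    have ha2 : ‖innA A ((X + ((ε:ℂ)) • Y) x) x‖ ^ 2 ≤ (2 * w) ^ 2 :=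
      pow_le_pow_left₀ ha0 ha 2
    have hb4 : normA A ((X + ((ε:ℂ)) • Y) x) ^ 4 ≤ (M + N) ^ 4 :=
      pow_le_pow_left₀ hb0 hb 4
    have h4 : (M + N) ^ 2 ≤ 2 * (M ^ 2 + N ^ 2) := by nlinarith [sq_nonneg (M - N)]
    have h5 : (M + N) ^ 4 ≤ (2 * (M ^ 2 + N ^ 2)) ^ 2 := by
      calc (M + N) ^ 4 = ((M + N) ^ 2) ^ 2 := by ring
        _ ≤ (2 * (M ^ 2 + N ^ 2)) ^ 2 := pow_le_pow_left₀ (sq_nonneg _) h4 2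
    nlinarith
  have hd0 : 0 ≤ dwA A (X + ((ε:ℂ)) • Y) :=
    Real.sSup_nonneg fun r hr => by obtain ⟨x, -, rfl⟩ := hr; exact Real.sqrt_nonneg _
  calc dwA A (X + ((ε:ℂ)) • Y) ^ 2
      ≤ Real.sqrt (4 * ((M ^ 2 + N ^ 2) ^ 2 + w ^ 2)) ^ 2 := pow_le_pow_left₀ hd0 hsqrt 2
    _ = 4 * ((M ^ 2 + N ^ 2) ^ 2 + w ^ 2) := Real.sq_sqrt hRHS

end DWAux

theorem stmt17 (A X Y : H →L[ℂ] H) (hA : A.IsPositive)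
    (hX : ∃ X', IsAAdjointPair A X X') (hY : ∃ Y', IsAAdjointPair A Y Y')
    (hX0 : opNormA A X ≠ 0) (hY0 : opNormA A Y ≠ 0) :
    dwA A (X + Y) ^ 2 ≤
      4 * ((opNormA A X ^ 2 + opNormA A Y ^ 2) ^ 2 + wA2 A (offDiag X Y) ^ 2) ∧
    dwA A (X - Y) ^ 2 ≤
      4 * ((opNormA A X ^ 2 + opNormA A Y ^ 2) ^ 2 + wA2 A (offDiag X Y) ^ 2) := by
  constructor
  · have h := DWAux.dw_bound hA hX hY hX0 hY0 1 (Or.inl rfl)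
    simpa using h
  · have h := DWAux.dw_bound hA hX hY hX0 hY0 (-1) (Or.inr rfl)
    have e : X + (((-1:ℝ):ℂ)) • Y = X - Y := by
      rw [show (((-1:ℝ):ℂ)) = -1 by norm_num, neg_one_smul, ← sub_eq_add_neg]
    rwa [e] at h
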